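/- On nine qubits labeled 1,…,9, for every state |ψ⟩ of qubits 4,…,9 the following circuit identity holds (operators act right to left): C_{{3,8,9}} H_3 C_{{2,6,7}} H_2 C_{{1,4,5}} H_1 C_{{1,2,3}} H_1 C_{{1,4,5}} H_2 C_{{2,6,7}} H_3 C_{{3,8,9}} ( |+⟩_1 ⊗ |+⟩_2 ⊗ |+⟩_3 ⊗ |ψ⟩ ) = |+⟩_1 ⊗ |+⟩_2 ⊗ |+⟩_3 ⊗ C_{{4,5,6,7,8,9}} |ψ⟩. In particular this circuit, built from one CCZ on the ancillas, six CCZ gates coupling one ancilla to two targets, and six Hadamard gates on the three ancillas 1,2,3 prepared in |+⟩, implements the six-qubit generalized controlled-Z gate C⁶Z on qubits 4,…,9. -/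
import Mathlib


noncomputable section

/-- The state space of qubits labeled by `ι`: a vector is the family of its
amplitudes in the computational basis `{|x⟩ : x : ι → Bool}`. -/
abbrev QState (ι : Type) := (ι → Bool) → ℂ

/-- The sign `(−1)^{∏_{i∈e} x_i}` of the generalized controlled-Z gate `C_e`
on the basis vector `|x⟩`. -/
def csign {ι : Type} (e : Finset ι) (x : ι → Bool) : ℂ :=
  if ∀ i ∈ e, x i = true then -1 else 1

/-- The generalized controlled-Z gate `C_e`, the diagonal unitary with
`C_e |x⟩ = (−1)^{∏_{i∈e} x_i} |x⟩`. -/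
def Cgate {ι : Type} (e : Finset ι) (ψ : QState ι) : QState ι :=
  fun x => csign e x * ψ x

/-- The Hadamard gate `H_i` on qubit `i`, acting as the identity on all other
qubits. -/
def Hgate {ι : Type} [DecidableEq ι] (i : ι) (ψ : QState ι) : QState ι :=
  fun x => (((Real.sqrt 2)⁻¹ : ℝ) : ℂ) *
    (ψ (Function.update x i false) +
      (if x i = true then -1 else 1) * ψ (Function.update x i true))

/-- The Pauli-X (bit flip) gate `X_i` on qubit `i`. -/
def Xgate {ι : Type} [DecidableEq ι] (i : ι) (ψ : QState ι) : QState ι :=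
  fun x => ψ (Function.update x i (!(x i)))

/-- The generalized CNOT gate with control set `f` and target `t ∉ f`:
it flips bit `t` of `x` exactly when `∏_{j∈f} x_j = 1`. -/
def CNOTgate {ι : Type} [DecidableEq ι] (f : Finset ι) (t : ι) (ψ : QState ι) : QState ι :=
  fun x => ψ (if ∀ j ∈ f, x j = true then Function.update x t (!(x t)) else x)

/-- `|+⟩^{⊗n}`, the uniform superposition `2^{−n/2} ∑_x |x⟩`. -/
def plusAll (ι : Type) [Fintype ι] : QState ι :=
  fun _ => (((Real.sqrt 2)⁻¹ : ℝ) : ℂ) ^ (Fintype.card ι)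

/-- The computational-basis ket `|s⟩`. -/
def zketS {ι : Type} [Fintype ι] [DecidableEq ι] (s : ι → Bool) : QState ι :=
  fun x => if x = s then 1 else 0

/-- The Pauli-X-basis product ket: qubit `i` is `|+⟩` if `s i = false` and
`|−⟩` if `s i = true`, where `|±⟩ = (|0⟩ ± |1⟩)/√2`. -/
def xketS {ι : Type} [Fintype ι] (s : ι → Bool) : QState ι :=
  fun x => ∏ i, ((((Real.sqrt 2)⁻¹ : ℝ) : ℂ) * (if s i && x i then -1 else 1))

/-- Tensor product of a state of the qubits `κ` with a state of the qubits `ι`. -/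
def tensP {κ ι : Type} (φ : QState κ) (u : QState ι) : QState (κ ⊕ ι) :=
  fun x => φ (fun i => x (Sum.inl i)) * u (fun j => x (Sum.inr j))

/-- The partial inner product `(⟨φ|_κ ⊗ I)`, sending a state of the qubits
`κ ⊕ ι` to a state of the remaining qubits `ι`. -/
def pinner {κ ι : Type} [Fintype κ] [DecidableEq κ] (φ : QState κ) (w : QState (κ ⊕ ι)) :
    QState ι :=
  fun y => ∑ b : κ → Bool, (starRingEnd ℂ) (φ b) * w (Sum.elim b y)

/-- Tensor product of a single-qubit state on qubit `i` with a state of the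
remaining qubits. -/
def tensQ {ι : Type} [DecidableEq ι] (i : ι) (φ : Bool → ℂ) (ψ : QState {j : ι // j ≠ i}) :
    QState ι :=
  fun x => φ (x i) * ψ (fun j => x j.1)

/-- The partial inner product over the single qubit `i`. -/
def pinner1 {ι : Type} [DecidableEq ι] (i : ι) (φ : Bool → ℂ) (w : QState ι) :
    QState {j : ι // j ≠ i} :=
  fun y => ∑ b : Bool, (starRingEnd ℂ) (φ b) * w (fun j => if h : j = i then b else y ⟨j, h⟩)

/-- The hypergraph state `∏_{e∈E} C_e |+⟩^{⊗|V|}` of the hypergraph `(V, E)`. -/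
def hgState {ι : Type} [Fintype ι] (E : Finset (Finset ι)) : QState ι :=
  fun x => (∏ e ∈ E, csign e x) * plusAll ι x

/-- Sequential composition (operator product) of a list of operators. -/
def seqComp {α : Type} (fs : List (α → α)) : α → α := fs.foldr (· ∘ ·) id
set_option maxHeartbeats 4000000 in
/-- The circuit identity implementing the six-qubit
generalized controlled-Z gate `C⁶Z`:  on nine qubits with ancillas
`1,2,3 = Sum.inl 0,1,2` prepared in `|+⟩` and targets
`4,…,9 = Sum.inr 0,…,5`, for every state `ψ` of the targets,
`C_{389} H₃ C_{267} H₂ C_{145} H₁ C_{123} H₁ C_{145} H₂ C_{267} H₃ C_{389}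
  (|+⟩₁⊗|+⟩₂⊗|+⟩₃⊗|ψ⟩) = |+⟩₁⊗|+⟩₂⊗|+⟩₃⊗ C_{456789}|ψ⟩`. -/
theorem C6Z_circuit_identity (ψ : QState (Fin 6)) :
    Cgate ({Sum.inl 2, Sum.inr 4, Sum.inr 5} : Finset (Fin 3 ⊕ Fin 6))
      (Hgate (Sum.inl 2 : Fin 3 ⊕ Fin 6)
        (Cgate {Sum.inl 1, Sum.inr 2, Sum.inr 3}
          (Hgate (Sum.inl 1)
            (Cgate {Sum.inl 0, Sum.inr 0, Sum.inr 1}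
              (Hgate (Sum.inl 0)
                (Cgate {Sum.inl 0, Sum.inl 1, Sum.inl 2}
                  (Hgate (Sum.inl 0)
                    (Cgate {Sum.inl 0, Sum.inr 0, Sum.inr 1}
                      (Hgate (Sum.inl 1)
                        (Cgate {Sum.inl 1, Sum.inr 2, Sum.inr 3}
                          (Hgate (Sum.inl 2)
                            (Cgate {Sum.inl 2, Sum.inr 4, Sum.inr 5}
                              (tensP (plusAll (Fin 3)) ψ))))))))))))) =
      tensP (plusAll (Fin 3))
        (Cgate ({0, 1, 2, 3, 4, 5} : Finset (Fin 6)) ψ) := by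
  funext x
  have hu6 : (((Real.sqrt 2 : ℝ) : ℂ))⁻¹ ^ 6 = 8⁻¹ := by
    rw [show (((Real.sqrt 2 : ℝ) : ℂ))⁻¹ = ((((Real.sqrt 2)⁻¹ : ℝ)) : ℂ) by push_cast; ring]
    have h2 : (Real.sqrt 2) ^ 6 = 8 := by
      have h := Real.sq_sqrt (by norm_num : (0:ℝ) ≤ 2)
      calc Real.sqrt 2 ^ 6 = (Real.sqrt 2 ^ 2) ^ 3 := by ring
        _ = 8 := by rw [h]; norm_num
    rw [show ((((Real.sqrt 2)⁻¹ : ℝ)) : ℂ) ^ 6 = ((((Real.sqrt 2) ^ 6)⁻¹ : ℝ) : ℂ) by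
      push_cast; ring, h2]
    norm_num
  have hr : (x (Sum.inr 0) = true ∧ x (Sum.inr 1) = true ∧ x (Sum.inr 2) = true ∧
      x (Sum.inr 3) = true ∧ x (Sum.inr 4) = true ∧ x (Sum.inr 5) = true) ↔
      ((x (Sum.inr 0) = true ∧ x (Sum.inr 1) = true) ∧
       (x (Sum.inr 2) = true ∧ x (Sum.inr 3) = true) ∧
       (x (Sum.inr 4) = true ∧ x (Sum.inr 5) = true)) := by tauto
  simp only [Cgate, Hgate, tensP, plusAll, csign, Function.update_apply,
    Finset.forall_mem_insert, Finset.mem_insert, Finset.mem_singleton, forall_eq,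
    Fintype.card_fin]
  simp [hr]
  by_cases ha0 : x (Sum.inl 0) = true <;> by_cases ha1 : x (Sum.inl 1) = true <;>
    by_cases ha2 : x (Sum.inl 2) = true <;>
    by_cases hp1 : x (Sum.inr 0) = true ∧ x (Sum.inr 1) = true <;>
    by_cases hp2 : x (Sum.inr 2) = true ∧ x (Sum.inr 3) = true <;>
    by_cases hp3 : x (Sum.inr 4) = true ∧ x (Sum.inr 5) = true <;>
    simp only [ha0, ha1, ha2, hp1, hp2, hp3, true_and, and_true, false_and, and_false,
      if_true, if_false, ite_true, ite_false, not_true, not_false_iff, and_self,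
      Bool.false_eq_true] <;>
    first
      | rfl
      | linear_combination (8 * (((Real.sqrt 2 : ℝ) : ℂ))⁻¹ ^ 3 *
          ψ (fun j => x (Sum.inr j))) * hu6
      | linear_combination (-(8 * (((Real.sqrt 2 : ℝ) : ℂ))⁻¹ ^ 3 *
          ψ (fun j => x (Sum.inr j)))) * hu6
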